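/- In any finite-stage two-player game with alternating moves, either player 2 has a basic winning strategy or player 1 has a basic unbeatable strategy. -/
import Mathlib


/-- A strategy of player 1 in a finite-stage two-player game with alternating
moves of length `N`: for each stage `t ≤ N`, a map from the pair of partial
histories `(a_0,…,a_{t-1})` and `(b_0,…,b_{t-1})` to an action in `A`. -/
def Strat1 (A B : Type*) (N : ℕ) : Type _ :=
  ∀ t : Fin (N + 1), (Fin t → A) → (Fin t → B) → A

/-- A strategy of player 2: for each stage `t ≤ N`, a map from the pair of
partial histories `(a_0,…,a_t)` and `(b_0,…,b_{t-1})` to an action in `B`. -/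
def Strat2 (A B : Type*) (N : ℕ) : Type _ :=
  ∀ t : Fin (N + 1), (Fin (t + 1) → A) → (Fin t → B) → B

/-- The pair of partial histories of play of length `t` generated by the
strategy profile `(ξ, η)`:  `a_t = x_t(a^{t-1}, b^{t-1})`, `b_t = y_t(a^t, b^{t-1})`. -/
noncomputable def play {A B : Type*} [Nonempty A] [Nonempty B] {N : ℕ}
    (ξ : Strat1 A B N) (η : Strat2 A B N) : (t : ℕ) → (Fin t → A) × (Fin t → B)
  | 0 => (Fin.elim0, Fin.elim0)
  | t + 1 =>
      let p := play ξ η t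
      if h : t < N + 1 then
        let a : A := ξ ⟨t, h⟩ p.1 p.2
        let b : B := η ⟨t, h⟩ (Fin.snoc p.1 a) p.2
        (Fin.snoc p.1 a, Fin.snoc p.2 b)
      else (fun _ => Classical.arbitrary A, fun _ => Classical.arbitrary B)

/-- The outcome (whole history) `h(ξ,η) = (a_0,…,a_N, b_0,…,b_N)` of the game. -/
noncomputable def hist {A B : Type*} [Nonempty A] [Nonempty B] {N : ℕ}
    (ξ : Strat1 A B N) (η : Strat2 A B N) :
    (Fin (N + 1) → A) × (Fin (N + 1) → B) :=
  play ξ η (N + 1)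

/-- `ξ` is a winning strategy for player 1: `U(ξ,η) > V(ξ,η)` for every `η`. -/
def Winning1 {A B : Type*} [Nonempty A] [Nonempty B] {N : ℕ}
    (u v : (Fin (N + 1) → A) × (Fin (N + 1) → B) → ℝ) (ξ : Strat1 A B N) : Prop :=
  ∀ η : Strat2 A B N, v (hist ξ η) < u (hist ξ η)

/-- `ξ` is an unbeatable strategy for player 1: `U(ξ,η) ≥ V(ξ,η)` for every `η`. -/
def Unbeatable1 {A B : Type*} [Nonempty A] [Nonempty B] {N : ℕ}
    (u v : (Fin (N + 1) → A) × (Fin (N + 1) → B) → ℝ) (ξ : Strat1 A B N) : Prop :=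
  ∀ η : Strat2 A B N, v (hist ξ η) ≤ u (hist ξ η)

/-- `η` is a winning strategy for player 2: `V(ξ,η) > U(ξ,η)` for every `ξ`. -/
def Winning2 {A B : Type*} [Nonempty A] [Nonempty B] {N : ℕ}
    (u v : (Fin (N + 1) → A) × (Fin (N + 1) → B) → ℝ) (η : Strat2 A B N) : Prop :=
  ∀ ξ : Strat1 A B N, u (hist ξ η) < v (hist ξ η)

/-- `η` is an unbeatable strategy for player 2: `V(ξ,η) ≥ U(ξ,η)` for every `ξ`. -/
def Unbeatable2 {A B : Type*} [Nonempty A] [Nonempty B] {N : ℕ}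
    (u v : (Fin (N + 1) → A) × (Fin (N + 1) → B) → ℝ) (η : Strat2 A B N) : Prop :=
  ∀ ξ : Strat1 A B N, u (hist ξ η) ≤ v (hist ξ η)

/-- A strategy of player 1 is basic if each move depends only on the previous
moves of the rival. -/
def IsBasic1 {A B : Type*} {N : ℕ} (ξ : Strat1 A B N) : Prop :=
  ∀ (t : Fin (N + 1)) (as as' : Fin t → A) (bs : Fin t → B), ξ t as bs = ξ t as' bs

/-- A strategy of player 2 is basic if each move depends only on the previous
moves of the rival. -/
def IsBasic2 {A B : Type*} {N : ℕ} (η : Strat2 A B N) : Prop :=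
  ∀ (t : Fin (N + 1)) (as : Fin (t + 1) → A) (bs bs' : Fin t → B), η t as bs = η t as bs'

/-- The sequence of partial histories of player 1's moves generated by the
strategy `ξ` against the fixed move sequence `bs` of player 2. -/
noncomputable def play1 {A B : Type*} [Nonempty A] {N : ℕ}
    (ξ : Strat1 A B N) (bs : Fin (N + 1) → B) : (t : ℕ) → Fin t → A
  | 0 => Fin.elim0
  | t + 1 =>
      let p := play1 ξ bs t
      if h : t < N + 1 then
        Fin.snoc p (ξ ⟨t, h⟩ p (fun i => bs ⟨i.val, lt_trans i.isLt h⟩))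
      else fun _ => Classical.arbitrary A

/-- The sequence of partial histories of player 2's moves generated by the
strategy `η` against the fixed move sequence `as` of player 1. -/
noncomputable def play2 {A B : Type*} [Nonempty B] {N : ℕ}
    (η : Strat2 A B N) (as : Fin (N + 1) → A) : (t : ℕ) → Fin t → B
  | 0 => Fin.elim0
  | t + 1 =>
      let p := play2 η as t
      if h : t < N + 1 then
        Fin.snoc p (η ⟨t, h⟩
          (fun i => as ⟨i.val, Nat.lt_of_le_of_lt (Nat.le_of_lt_succ i.isLt) h⟩) p)
      else fun _ => Classical.arbitrary B

section Aux

variable {A B : Type*} {N : ℕ}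

/-- `Pw u v t as bs` : player 1 can force `v ≤ u` from the position after `t` rounds. -/
noncomputable def Pw (u v : (Fin (N + 1) → A) × (Fin (N + 1) → B) → ℝ) :
    (t : ℕ) → (Fin t → A) → (Fin t → B) → Prop := fun t as bs =>
  if h : t < N + 1 then
    ∃ a : A, ∀ b : B, Pw u v (t + 1) (Fin.snoc as a) (Fin.snoc bs b)
  else
    v (fun i => as ⟨i, lt_of_lt_of_le i.isLt (not_lt.1 h)⟩,
       fun i => bs ⟨i, lt_of_lt_of_le i.isLt (not_lt.1 h)⟩) ≤
    u (fun i => as ⟨i, lt_of_lt_of_le i.isLt (not_lt.1 h)⟩,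
       fun i => bs ⟨i, lt_of_lt_of_le i.isLt (not_lt.1 h)⟩)
termination_by t => N + 1 - t
decreasing_by omega

lemma Pw_succ (u v : (Fin (N + 1) → A) × (Fin (N + 1) → B) → ℝ) {t : ℕ}
    (h : t < N + 1) (as : Fin t → A) (bs : Fin t → B) :
    Pw u v t as bs ↔ ∃ a : A, ∀ b : B, Pw u v (t + 1) (Fin.snoc as a) (Fin.snoc bs b) := by
  rw [Pw, dif_pos h]

lemma Pw_last (u v : (Fin (N + 1) → A) × (Fin (N + 1) → B) → ℝ)
    (as : Fin (N + 1) → A) (bs : Fin (N + 1) → B) :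
    Pw u v (N + 1) as bs ↔ v (as, bs) ≤ u (as, bs) := by
  rw [Pw, dif_neg (lt_irrefl _)]

open Classical in
noncomputable def ch1 [Nonempty A] (u v : (Fin (N + 1) → A) × (Fin (N + 1) → B) → ℝ)
    (t : ℕ) (as : Fin t → A) (bs : Fin t → B) : A :=
  if h : ∃ a : A, ∀ b : B, Pw u v (t + 1) (Fin.snoc as a) (Fin.snoc bs b) then h.choose
  else Classical.arbitrary A

lemma ch1_spec [Nonempty A] (u v : (Fin (N + 1) → A) × (Fin (N + 1) → B) → ℝ)
    {t : ℕ} (ht : t < N + 1) {as : Fin t → A} {bs : Fin t → B}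
    (hP : Pw u v t as bs) (b : B) :
    Pw u v (t + 1) (Fin.snoc as (ch1 u v t as bs)) (Fin.snoc bs b) := by
  rw [Pw_succ u v ht] at hP
  rw [ch1, dif_pos hP]
  exact hP.choose_spec b

open Classical in
noncomputable def ch2 [Nonempty B] (u v : (Fin (N + 1) → A) × (Fin (N + 1) → B) → ℝ)
    (t : ℕ) (as : Fin t → A) (a : A) (bs : Fin t → B) : B :=
  if h : ∃ b : B, ¬ Pw u v (t + 1) (Fin.snoc as a) (Fin.snoc bs b) then h.choose
  else Classical.arbitrary B

lemma ch2_spec [Nonempty B] (u v : (Fin (N + 1) → A) × (Fin (N + 1) → B) → ℝ)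
    {t : ℕ} (ht : t < N + 1) {as : Fin t → A} {bs : Fin t → B}
    (hP : ¬ Pw u v t as bs) (a : A) :
    ¬ Pw u v (t + 1) (Fin.snoc as a) (Fin.snoc bs (ch2 u v t as a bs)) := by
  rw [Pw_succ u v ht] at hP
  push_neg at hP
  have hex := hP a
  rw [ch2, dif_pos hex]
  exact hex.choose_spec

noncomputable def g1 [Nonempty A] (u v : (Fin (N + 1) → A) × (Fin (N + 1) → B) → ℝ) :
    (t : ℕ) → (Fin t → B) → Fin t → A
  | 0 => fun _ => Fin.elim0
  | t + 1 => fun bs =>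
      Fin.snoc (g1 u v t (Fin.init bs))
        (ch1 u v t (g1 u v t (Fin.init bs)) (Fin.init bs))

noncomputable def g2 [Nonempty B] (u v : (Fin (N + 1) → A) × (Fin (N + 1) → B) → ℝ) :
    (t : ℕ) → (Fin t → A) → Fin t → B
  | 0 => fun _ => Fin.elim0
  | t + 1 => fun as =>
      Fin.snoc (g2 u v t (Fin.init as))
        (ch2 u v t (Fin.init as) (as (Fin.last t)) (g2 u v t (Fin.init as)))

lemma g1_inv [Nonempty A] (u v : (Fin (N + 1) → A) × (Fin (N + 1) → B) → ℝ)
    (h0 : Pw u v 0 Fin.elim0 Fin.elim0) :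
    ∀ t, t ≤ N + 1 → ∀ bs : Fin t → B, Pw u v t (g1 u v t bs) bs := by
  intro t
  induction t with
  | zero =>
      intro _ bs
      have hb : bs = Fin.elim0 := funext fun i => i.elim0
      have hg : g1 u v 0 bs = Fin.elim0 := funext fun i => i.elim0
      rw [hg, hb]; exact h0
  | succ t ih =>
      intro ht bs
      have ht' : t < N + 1 := Nat.lt_of_succ_le ht
      have := ch1_spec u v ht' (ih (le_of_lt ht') (Fin.init bs)) (bs (Fin.last t))
      rw [Fin.snoc_init_self] at this
      simpa [g1] using this

lemma g2_inv [Nonempty B] (u v : (Fin (N + 1) → A) × (Fin (N + 1) → B) → ℝ)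
    (h0 : ¬ Pw u v 0 Fin.elim0 Fin.elim0) :
    ∀ t, t ≤ N + 1 → ∀ as : Fin t → A, ¬ Pw u v t as (g2 u v t as) := by
  intro t
  induction t with
  | zero =>
      intro _ as
      have ha : as = Fin.elim0 := funext fun i => i.elim0
      have hg : g2 u v 0 as = Fin.elim0 := funext fun i => i.elim0
      rw [hg, ha]; exact h0
  | succ t ih =>
      intro ht as
      have ht' : t < N + 1 := Nat.lt_of_succ_le ht
      have := ch2_spec u v ht' (ih (le_of_lt ht') (Fin.init as)) (as (Fin.last t))
      rw [Fin.snoc_init_self] at this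
      simpa [g2] using this

end Aux

/-- In any finite-stage two-player game with alternating moves, either
player 2 has a basic winning strategy or player 1 has a basic unbeatable
strategy. -/
theorem win2_or_unbeatable1_basic {A B : Type*} [Nonempty A] [Nonempty B] {N : ℕ}
    (u v : (Fin (N + 1) → A) × (Fin (N + 1) → B) → ℝ) :
    (∃ η : Strat2 A B N, IsBasic2 η ∧ Winning2 u v η) ∨
    (∃ ξ : Strat1 A B N, IsBasic1 ξ ∧ Unbeatable1 u v ξ) := by

  by_cases h0 : Pw u v 0 (Fin.elim0 : Fin 0 → A) (Fin.elim0 : Fin 0 → B)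
  · right
    refine ⟨fun t as bs => ch1 u v t.val (g1 u v t.val bs) bs,
      fun t as as' bs => rfl, ?_⟩
    intro η
    set ξ : Strat1 A B N := fun t as bs => ch1 u v t.val (g1 u v t.val bs) bs with hξ
    have claim : ∀ t, t ≤ N + 1 → (play ξ η t).1 = g1 u v t (play ξ η t).2 := by
      intro t
      induction t with
      | zero => intro _; exact funext fun i => i.elim0
      | succ t ih =>
          intro ht
          have ht' : t < N + 1 := Nat.lt_of_succ_le ht
          have ih' := ih (le_of_lt ht')
          simp only [play, dif_pos ht', g1, Fin.init_snoc, hξ]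
          rw [← ih']
    have h1 := claim (N + 1) le_rfl
    have h2 := g1_inv u v h0 (N + 1) le_rfl (play ξ η (N + 1)).2
    rw [← h1, Pw_last] at h2
    simpa [hist] using h2
  · left
    refine ⟨fun t as bs =>
        ch2 u v t.val (Fin.init as) (as (Fin.last t.val)) (g2 u v t.val (Fin.init as)),
      fun t as bs bs' => rfl, ?_⟩
    intro ξ
    set η : Strat2 A B N := fun t as bs =>
      ch2 u v t.val (Fin.init as) (as (Fin.last t.val)) (g2 u v t.val (Fin.init as)) with hη
    have claim : ∀ t, t ≤ N + 1 → (play ξ η t).2 = g2 u v t (play ξ η t).1 := by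
      intro t
      induction t with
      | zero => intro _; exact funext fun i => i.elim0
      | succ t ih =>
          intro ht
          have ht' : t < N + 1 := Nat.lt_of_succ_le ht
          have ih' := ih (le_of_lt ht')
          simp only [play, dif_pos ht', g2, Fin.init_snoc, Fin.snoc_last, hη]
          rw [← ih']
    have h1 := claim (N + 1) le_rfl
    have h2 := g2_inv u v h0 (N + 1) le_rfl (play ξ η (N + 1)).1
    rw [← h1, Pw_last] at h2
    have := not_le.mp h2
    simpa [hist] using this
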